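/- Let T > 0 and ω ∈ ℝ with e^{2iωT} ≠ 1. Define for θ > 0, θ ≠ ω, h(θ) = Re( e^{iωT} cos(θT) + e^{iωT-iθT}·ω/(θ-ω) - θ/(θ-ω) ). Then limsup_{θ→∞} h(θ) ≤ |cos(ωT)| - 1 < 0; in particular there exist N > 0 and ε > 0 such that h(θ) ≤ -ε for all θ ≥ N. -/

import Mathlib

open Filter

theorem stmt13 (T : ℝ) (hT : T > 0) (ω : ℝ)
    (hωT : Complex.exp (2 * Complex.I * ω * T) ≠ 1)
    (h : ℝ → ℝ)
    (hh : ∀ θ : ℝ, θ > 0 → θ ≠ ω →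
      h θ = (Complex.exp (Complex.I * ω * T) * Real.cos (θ * T) +
          Complex.exp (Complex.I * ω * T - Complex.I * θ * T) * (ω / (θ - ω)) -
          (θ / (θ - ω))).re) :
    limsup h atTop ≤ |Real.cos (ω * T)| - 1 ∧
      |Real.cos (ω * T)| - 1 < 0 ∧
      ∃ N ε : ℝ, N > 0 ∧ ε > 0 ∧ ∀ θ : ℝ, θ ≥ N → h θ ≤ -ε := by
  set c := |Real.cos (ω * T)| with hc_def
  have hc0 : 0 ≤ c := abs_nonneg _
  have hc1 : c < 1 := by
    rcases lt_or_eq_of_le (Real.abs_cos_le_one (ω * T)) with hlt | heq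
    · exact hlt
    · exfalso
      have hsin : Real.sin (ω * T) = 0 := by
        nlinarith [Real.sin_sq_add_cos_sq (ω * T), sq_abs (Real.cos (ω * T)),
          sq_nonneg (Real.sin (ω * T))]
      rw [Real.sin_eq_zero_iff] at hsin
      obtain ⟨n, hn⟩ := hsin
      apply hωT
      rw [Complex.exp_eq_one_iff]
      refine ⟨n, ?_⟩
      have hωTC : ((ω : ℂ) * T) = ((n : ℝ) * Real.pi : ℝ) := by
        rw [hn]; push_cast; ring
      rw [show (2 : ℂ) * Complex.I * ω * T = ((ω:ℂ) * T) * (2 * Complex.I) by ring, hωTC]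
      push_cast
      ring
  -- explicit real form of h
  have hre : ∀ θ : ℝ, θ > 0 → θ ≠ ω → h θ =
      Real.cos (ω*T) * Real.cos (θ*T) + Real.cos ((ω-θ)*T) * (ω/(θ-ω)) - θ/(θ-ω) := by
    intro θ hθ hθω
    rw [hh θ hθ hθω]
    have e1 : Complex.I * (ω:ℂ) * T = ((ω*T : ℝ) : ℂ) * Complex.I := by push_cast; ring
    have e2 : Complex.I * (ω:ℂ) * T - Complex.I * θ * T = (((ω-θ)*T : ℝ) : ℂ) * Complex.I := by
      push_cast; ring
    have e3 : ((ω:ℂ) / ((θ:ℂ) - ω)) = ((ω/(θ-ω) : ℝ) : ℂ) := by push_cast; ring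
    have e4 : ((θ:ℂ) / ((θ:ℂ) - ω)) = ((θ/(θ-ω) : ℝ) : ℂ) := by push_cast; ring
    rw [e2, e1, e3, e4]
    simp only [Complex.add_re, Complex.sub_re, Complex.mul_re, Complex.ofReal_re,
      Complex.ofReal_im, Complex.exp_ofReal_mul_I_re, mul_zero, zero_mul, sub_zero]
  -- two-sided bounds for large θ
  have key : ∀ θ : ℝ, θ ≥ 1 → θ - ω ≥ 1 →
      h θ ≤ c - 1 + 2*|ω|/(θ-ω) ∧ -2 - 2*|ω|/(θ-ω) ≤ h θ := by
    intro θ hθ1 hd1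
    have hθ0 : θ > 0 := lt_of_lt_of_le one_pos hθ1
    have hd0 : θ - ω > 0 := lt_of_lt_of_le one_pos hd1
    have hθω : θ ≠ ω := by intro he; rw [he] at hd0; simp at hd0
    rw [hre θ hθ0 hθω]
    have hb1 : |Real.cos (ω*T) * Real.cos (θ*T)| ≤ c := by
      rw [abs_mul]
      calc |Real.cos (ω*T)| * |Real.cos (θ*T)| ≤ |Real.cos (ω*T)| * 1 :=
            mul_le_mul_of_nonneg_left (Real.abs_cos_le_one _) (abs_nonneg _)
        _ = c := by rw [mul_one]
    have hb2 : |Real.cos ((ω-θ)*T) * (ω/(θ-ω))| ≤ |ω|/(θ-ω) := by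
      rw [abs_mul, abs_div, abs_of_pos hd0]
      calc |Real.cos ((ω-θ)*T)| * (|ω|/(θ-ω)) ≤ 1 * (|ω|/(θ-ω)) :=
            mul_le_mul_of_nonneg_right (Real.abs_cos_le_one _) (by positivity)
        _ = |ω|/(θ-ω) := one_mul _
    have hb3 : θ/(θ-ω) = 1 + ω/(θ-ω) := by field_simp; ring
    have hb4 : |ω/(θ-ω)| = |ω|/(θ-ω) := by rw [abs_div, abs_of_pos hd0]
    rw [hb3]
    have h1 := abs_le.mp hb1
    have h2 := abs_le.mp hb2
    have h4 : -(|ω|/(θ-ω)) ≤ ω/(θ-ω) ∧ ω/(θ-ω) ≤ |ω|/(θ-ω) := abs_le.mp hb4.le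
    have h2d : 2*|ω|/(θ-ω) = |ω|/(θ-ω) + |ω|/(θ-ω) := by ring
    constructor
    · linarith [h1.2, h2.2, h4.1]
    · linarith [h1.1, h2.1, h4.2]
  -- from a big enough θ, h θ ≤ c - 1 + δ
  have aux : ∀ δ : ℝ, δ > 0 → ∀ θ : ℝ, θ ≥ max 1 (ω + 1 + 2*|ω|/δ) → h θ ≤ c - 1 + δ := by
    intro δ hδ θ hθ
    have hθ1 : θ ≥ 1 := le_trans (le_max_left _ _) hθ
    have hA : (0:ℝ) ≤ 2*|ω| := by positivity
    have hd1 : θ - ω ≥ 1 + 2*|ω|/δ := by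
      have := le_trans (le_max_right 1 (ω + 1 + 2*|ω|/δ)) hθ
      linarith
    have hd1' : θ - ω ≥ 1 := by
      have : 0 ≤ 2*|ω|/δ := by positivity
      linarith
    have hd0 : θ - ω > 0 := lt_of_lt_of_le one_pos hd1'
    have hsmall : 2*|ω|/(θ-ω) ≤ δ := by
      rw [div_le_iff₀ hd0]
      have hcancel : δ * (2*|ω|/δ) = 2*|ω| := by field_simp
      nlinarith [mul_le_mul_of_nonneg_left hd1 hδ.le]
    have := (key θ hθ1 hd1').1
    linarith
  refine ⟨?_, by linarith, ?_⟩
  · -- limsup bound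
    apply le_of_forall_pos_le_add
    intro δ hδ
    have hcob : IsCoboundedUnder (· ≤ ·) atTop h := by
      apply Filter.isCoboundedUnder_le_of_eventually_le atTop (x := -3)
      filter_upwards [eventually_ge_atTop (max 1 (ω + 1 + 2*|ω|))] with θ hθ
      have hθ1 : θ ≥ 1 := le_trans (le_max_left _ _) hθ
      have hd1 : θ - ω ≥ 1 + 2*|ω| := by
        have := le_trans (le_max_right 1 (ω + 1 + 2*|ω|)) hθ
        linarith
      have hA : (0:ℝ) ≤ 2*|ω| := by positivity
      have hd1' : θ - ω ≥ 1 := by linarith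
      have hd0 : θ - ω > 0 := lt_of_lt_of_le one_pos hd1'
      have hsmall : 2*|ω|/(θ-ω) ≤ 1 := by
        rw [div_le_one hd0]; linarith
      have := (key θ hθ1 hd1').2
      linarith
    apply limsup_le_of_le hcob
    filter_upwards [eventually_ge_atTop (max 1 (ω + 1 + 2*|ω|/δ))] with θ hθ
    exact aux δ hδ θ hθ
  · -- explicit N, ε
    refine ⟨max 1 (ω + 1 + 2*|ω|/((1-c)/2)), (1-c)/2, ?_, by linarith, ?_⟩
    · exact lt_of_lt_of_le one_pos (le_max_left _ _)
    · intro θ hθ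
      have := aux ((1-c)/2) (by linarith) θ hθ
      linarith
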